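/- Let L be a nonnegative square matrix with spectral radius s(L). Define q_n = E[∏_{t=1}^n M_t] where M_t is the discount process generated by a finite irreducible Markov chain with stationary initial distribution and L(z,z') = Φ(z,z')E[m(z',ε)]. Then the asymptotic yield κ(M) := lim_{n→∞} (−ln q_n)/n exists and equals −ln s(L). -/

import Mathlib

open MeasureTheory Filter

/-- Path expectation `E_z[∏_{t=1}^n M_t · h(Z_n)]` (innovations integrated out). -/
noncomputable def pathExp {Z : Type*} [Fintype Z] (Φ : Z → Z → ℝ) (mbar : Z → ℝ)
    (n : ℕ) (h : Z → ℝ) (z : Z) : ℝ :=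
  ∑ ω : Fin n → Z,
    (∏ i : Fin n,
      Φ (if hi : (i : ℕ) = 0 then z
         else ω ⟨(i : ℕ) - 1, lt_of_le_of_lt (Nat.sub_le _ _) i.isLt⟩) (ω i)
        * mbar (ω i)) *
    (if hn : n = 0 then h z
     else h (ω ⟨n - 1, Nat.sub_lt (Nat.pos_of_ne_zero hn) Nat.one_pos⟩))

/-- The spectral radius of a real square matrix, viewed as a continuous linear operator on
Euclidean space. -/
noncomputable def specRad {Z : Type*} [Fintype Z] [DecidableEq Z] (L : Matrix Z Z ℝ) : ℝ :=
  (spectralRadius ℝ (LinearMap.toContinuousLinearMap (Matrix.toEuclideanLin L))).toReal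

open Matrix
open scoped NNReal ENNReal

lemma pathExp_succ {Z : Type*} [Fintype Z] (Φ : Z → Z → ℝ) (mbar : Z → ℝ) (n : ℕ) (h : Z → ℝ)
    (z : Z) : pathExp Φ mbar (n+1) h z = ∑ y, (Φ z y * mbar y) * pathExp Φ mbar n h y := by
  classical
  rw [pathExp]
  rw [← Equiv.sum_comp (Fin.consEquiv (fun _ : Fin (n+1) => Z))]
  rw [Fintype.sum_prod_type]
  refine Finset.sum_congr rfl fun y _ => ?_
  rw [pathExp, Finset.mul_sum]
  refine Finset.sum_congr rfl fun τ _ => ?_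
  have hωdef : ((Fin.consEquiv (fun _ : Fin (n+1) => Z)) (y, τ)) = Fin.cons y τ := rfl
  rw [hωdef]
  rw [Fin.prod_univ_succ]
  -- first factor
  simp only [Fin.val_zero, Fin.cons_zero, dif_pos rfl]
  rw [mul_assoc]
  congr 1
  -- remaining product and tail
  congr 1
  · refine Finset.prod_congr rfl fun i _ => ?_
    rw [Fin.cons_succ]
    congr 1
    have hval : ((i.succ : Fin (n+1)) : ℕ) = (i : ℕ) + 1 := rfl
    rcases i with ⟨iv, hiv⟩
    cases iv with
    | zero =>
      simp only [hval]
      rw [dif_neg (by simp)]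
      have hidx : (⟨0 + 1 - 1, by omega⟩ : Fin (n+1)) = 0 := by ext; simp
      rw [hidx, Fin.cons_zero]
      simp
    | succ k =>
      simp only [hval]
      rw [dif_neg (by simp)]
      have h1 : (⟨k + 1 + 1 - 1, by omega⟩ : Fin (n+1)) = Fin.succ ⟨k, by omega⟩ := by
        ext; simp
      rw [h1, Fin.cons_succ]
      rw [dif_neg (by simp)]
      have h2 : (⟨k + 1 - 1, by omega⟩ : Fin n) = ⟨k, by omega⟩ := by ext; simp
      rw [h2]
  · rw [dif_neg (Nat.succ_ne_zero n)]
    cases n with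
    | zero =>
      rw [dif_pos rfl]
      have : (⟨0 + 1 - 1, by omega⟩ : Fin 1) = 0 := by ext; simp
      rw [this, Fin.cons_zero]
    | succ k =>
      rw [dif_neg (Nat.succ_ne_zero k)]
      have h1 : (⟨k + 1 + 1 - 1, by omega⟩ : Fin (k+2)) = Fin.succ ⟨k + 1 - 1, by omega⟩ := by
        ext; simp
      rw [h1, Fin.cons_succ]

lemma pathExp_eq {Z : Type*} [Fintype Z] [DecidableEq Z] (Φ : Z → Z → ℝ) (mbar : Z → ℝ) (n : ℕ)
    (h : Z → ℝ) (z : Z) :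
    pathExp Φ mbar n h z = ((Matrix.of fun a b => Φ a b * mbar b) ^ n).mulVec h z := by
  induction n generalizing z with
  | zero => simp [pathExp, Matrix.mulVec, dotProduct, Matrix.one_apply]
  | succ n ih =>
    rw [pathExp_succ, pow_succ', ← Matrix.mulVec_mulVec]
    rw [Matrix.mulVec, dotProduct]
    refine Finset.sum_congr rfl fun y _ => ?_
    rw [ih y]
    rfl

lemma pow_entry_nonneg {Z : Type*} [Fintype Z] [DecidableEq Z] (A : Matrix Z Z ℝ)
    (hA : ∀ i j, 0 ≤ A i j) : ∀ n i j, 0 ≤ (A ^ n) i j := by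
  intro n
  induction n with
  | zero => intro i j; rw [pow_zero]; by_cases h : i = j <;> simp [Matrix.one_apply, h]
  | succ n ih =>
    intro i j
    rw [pow_succ, Matrix.mul_apply]
    exact Finset.sum_nonneg fun k _ => mul_nonneg (ih i k) (hA k j)

/-- stationary distribution of an irreducible chain is strictly positive -/
lemma stationary_pos {Z : Type*} [Fintype Z] [DecidableEq Z] [Nonempty Z]
    (Φ : Z → Z → ℝ) (hΦnn : ∀ z z', 0 ≤ Φ z z')
    (hirr : ∀ z z', ∃ n : ℕ, 0 < ((Matrix.of Φ) ^ n) z z')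
    (π : Z → ℝ) (hπnn : ∀ z, 0 ≤ π z) (hπsum : ∑ z, π z = 1)
    (hπstat : ∀ z', ∑ z, π z * Φ z z' = π z') : ∀ z, 0 < π z := by
  obtain ⟨z0, hz0⟩ : ∃ z0, 0 < π z0 := by
    by_contra hc
    push_neg at hc
    have : ∑ z, π z = 0 := Finset.sum_eq_zero fun z _ => le_antisymm (hc z) (hπnn z)
    rw [hπsum] at this; norm_num at this
  have hstatpow : ∀ n : ℕ, Matrix.vecMul π ((Matrix.of Φ) ^ n) = π := by
    intro n
    induction n with
    | zero => simp
    | succ n ih =>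
      rw [pow_succ, ← Matrix.vecMul_vecMul, ih]
      funext z'
      rw [← hπstat z']
      rfl
  intro z'
  obtain ⟨n, hn⟩ := hirr z0 z'
  have := hstatpow n
  have h2 : π z' = ∑ z, π z * ((Matrix.of Φ) ^ n) z z' := by
    conv_lhs => rw [← this]
    rfl
  rw [h2]
  have : 0 < π z0 * ((Matrix.of Φ) ^ n) z0 z' := mul_pos hz0 hn
  refine lt_of_lt_of_le this ?_
  exact Finset.single_le_sum (f := fun z => π z * ((Matrix.of Φ) ^ n) z z')
    (fun z _ => mul_nonneg (hπnn z) (pow_entry_nonneg _ hΦnn n z z')) (Finset.mem_univ z0)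

theorem auxKey {Z : Type*} [Fintype Z] [DecidableEq Z] [Nonempty Z]
    (L : Matrix Z Z ℝ) (hLnn : ∀ i j, 0 ≤ L i j)
    (π : Z → ℝ) (hπpos : ∀ z, 0 < π z)
    (q : ℕ → ℝ) (hq : ∀ n, q n = π ⬝ᵥ ((L ^ n) *ᵥ (fun _ => 1)))
    (c : ℝ) (hc : 0 < c) (hlow : ∀ n, c ^ n ≤ q n) :
    Tendsto (fun n : ℕ => - Real.log (q n) / n) atTop (nhds (- Real.log (specRad L))) := by
  classical
  -- minimum of π
  obtain ⟨zm, -, hzm⟩ := Finset.exists_mem_eq_inf' (Finset.univ_nonempty (α := Z)) π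
  set pm : ℝ := Finset.univ.inf' Finset.univ_nonempty π with hpmdef
  have hpm : 0 < pm := hzm ▸ hπpos zm
  have hpmle : ∀ z, pm ≤ π z := fun z => Finset.inf'_le π (Finset.mem_univ z)
  have hqpos : ∀ n, 0 < q n := fun n => lt_of_lt_of_le (pow_pos hc n) (hlow n)
  -- nonnegativity of matrix powers
  have hpnn : ∀ (n : ℕ) (i j : Z), 0 ≤ (L ^ n) i j := by
    intro n
    induction n with
    | zero => intro i j; rw [pow_zero]; by_cases h : i = j <;> simp [Matrix.one_apply, h]
    | succ n ih =>
      intro i j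
      rw [pow_succ, Matrix.mul_apply]
      exact Finset.sum_nonneg fun k _ => mul_nonneg (ih i k) (hLnn k j)
  have hv1nn : ∀ (n : ℕ) (z : Z), 0 ≤ ((L ^ n) *ᵥ (fun _ => 1)) z := by
    intro n z
    exact Finset.sum_nonneg fun k _ => mul_nonneg (hpnn n z k) zero_le_one
  have hvle : ∀ (n : ℕ) (z : Z), pm * ((L ^ n) *ᵥ (fun _ => 1)) z ≤ q n := by
    intro n z
    calc pm * ((L ^ n) *ᵥ (fun _ => 1)) z ≤ π z * ((L ^ n) *ᵥ (fun _ => 1)) z :=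
          mul_le_mul_of_nonneg_right (hpmle z) (hv1nn n z)
    _ ≤ ∑ w, π w * ((L ^ n) *ᵥ (fun _ => 1)) w :=
          Finset.single_le_sum (fun w _ => mul_nonneg (hπpos w).le (hv1nn n w)) (Finset.mem_univ z)
    _ = q n := (hq n).symm
  -- subadditivity
  have hvm_nn : ∀ (m : ℕ) (z : Z), 0 ≤ (π ᵥ* L ^ m) z := by
    intro m z
    exact Finset.sum_nonneg fun w _ => mul_nonneg (hπpos w).le (hpnn m w z)
  have hqm : ∀ m, q m = ∑ z, (π ᵥ* L ^ m) z := by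
    intro m
    rw [hq m, Matrix.dotProduct_mulVec]
    simp [dotProduct]
  have hsub0 : ∀ m n, pm * q (m + n) ≤ q m * q n := by
    intro m n
    have h1 : q (m + n) = ∑ z, (π ᵥ* L ^ m) z * ((L ^ n) *ᵥ (fun _ => 1)) z := by
      rw [hq (m + n), pow_add, ← Matrix.mulVec_mulVec, Matrix.dotProduct_mulVec]
      rfl
    rw [h1, Finset.mul_sum, hqm m, Finset.sum_mul]
    refine Finset.sum_le_sum fun z _ => ?_
    calc pm * ((π ᵥ* L ^ m) z * ((L ^ n) *ᵥ (fun _ => 1)) z)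
        = (π ᵥ* L ^ m) z * (pm * ((L ^ n) *ᵥ (fun _ => 1)) z) := by ring
      _ ≤ (π ᵥ* L ^ m) z * q n := mul_le_mul_of_nonneg_left (hvle n z) (hvm_nn m z)
  set u : ℕ → ℝ := fun n => Real.log (q n) - Real.log pm with hudef
  have hsubadd : Subadditive u := by
    intro m n
    have h1 : pm * q (m + n) ≤ q m * q n := hsub0 m n
    have h2 : Real.log (pm * q (m + n)) ≤ Real.log (q m * q n) :=
      Real.log_le_log (mul_pos hpm (hqpos _)) h1
    rw [Real.log_mul hpm.ne' (hqpos _).ne', Real.log_mul (hqpos _).ne' (hqpos _).ne'] at h2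
    simp only [hudef]
    linarith
  have hbdd : BddBelow (Set.range fun n : ℕ => u n / n) := by
    refine ⟨min 0 (Real.log c - |Real.log pm|), ?_⟩
    rintro x ⟨n, rfl⟩
    rcases Nat.eq_zero_or_pos n with hn | hn
    · subst hn; simp
    · refine le_trans (min_le_right _ _) ?_
      have hn' : (1 : ℝ) ≤ n := by exact_mod_cast hn
      have hlog : n * Real.log c ≤ Real.log (q n) := by
        have := Real.log_le_log (pow_pos hc n) (hlow n)
        rw [Real.log_pow] at this; linarith [this]
      have h1 : Real.log c - |Real.log pm| ≤ (Real.log (q n)) / n - (Real.log pm) / n := by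
        have e1 : Real.log c ≤ Real.log (q n) / n := by
          rw [le_div_iff₀ (by linarith : (0:ℝ) < n)]
          linarith [hlog]
        have e2 : - (|Real.log pm|) ≤ - (Real.log pm / n) := by
          rw [neg_le_neg_iff]
          calc Real.log pm / n ≤ |Real.log pm / n| := le_abs_self _
            _ = |Real.log pm| / n := by rw [abs_div, abs_of_nonneg (by linarith : (0:ℝ) ≤ n)]
            _ ≤ |Real.log pm| := by
                rw [div_le_iff₀ (by linarith : (0:ℝ) < n)]
                nlinarith [abs_nonneg (Real.log pm)]
        linarith
      simpa [hudef, sub_div] using h1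
  have hlim := hsubadd.tendsto_lim hbdd
  set l : ℝ := hsubadd.lim with hldef
  have htends : Tendsto (fun n : ℕ => Real.log (q n) / n) atTop (nhds l) := by
    have h0 : Tendsto (fun n : ℕ => Real.log pm / n) atTop (nhds 0) :=
      tendsto_const_div_atTop_nhds_zero_nat _
    have := hlim.add h0
    rw [add_zero] at this
    refine this.congr fun n => ?_
    simp only [hudef]
    rw [sub_div, sub_add_cancel]
  set ρ : ℝ := Real.exp l with hρdef
  have hρpos : 0 < ρ := Real.exp_pos l
  have hlogρ : Real.log ρ = l := Real.log_exp l
  -- lower bound q n ≥ pm * ρ^n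
  have hql : ∀ n, pm * ρ ^ n ≤ q n := by
    intro n
    rcases Nat.eq_zero_or_pos n with hn | hn
    · subst hn
      simp only [pow_zero, mul_one]
      calc pm ≤ π zm := hpmle zm
        _ ≤ ∑ z, π z * 1 := by
            simpa using Finset.single_le_sum (f := fun z => π z)
              (fun z _ => (hπpos z).le) (Finset.mem_univ zm)
        _ = q 0 := by rw [hq 0]; simp [Matrix.mulVec, dotProduct, Matrix.one_apply]
    · have h1 : l ≤ u n / n := hsubadd.lim_le_div hbdd hn.ne'
      have hn' : (0:ℝ) < n := by exact_mod_cast hn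
      have h2 : (n : ℝ) * l ≤ Real.log (q n) - Real.log pm := by
        rw [le_div_iff₀ hn'] at h1
        simpa [hudef, mul_comm] using h1
      have h3 : Real.log (pm * ρ ^ n) ≤ Real.log (q n) := by
        rw [Real.log_mul hpm.ne' (pow_pos hρpos n).ne', Real.log_pow, hlogρ]
        linarith
      have := Real.exp_le_exp.mpr h3
      rwa [Real.exp_log (mul_pos hpm (pow_pos hρpos n)), Real.exp_log (hqpos n)] at this
  -- every real eigenvalue is ≤ ρ in absolute value
  have heig : ∀ lam ∈ spectrum ℝ L, |lam| ≤ ρ := by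
    intro lam hlam
    rcases eq_or_ne lam 0 with rfl | hlam0
    · simpa using hρpos.le
    -- eigenvector
    have hlam' : lam ∈ spectrum ℝ (Matrix.toLinAlgEquiv' L) := by
      rwa [AlgEquiv.spectrum_eq]
    have he : Module.End.HasEigenvalue (Matrix.toLinAlgEquiv' L) lam :=
      Module.End.HasEigenvalue.of_mem_spectrum hlam'
    obtain ⟨v, hv⟩ := he.exists_hasEigenvector
    have hvne : v ≠ 0 := hv.2
    have hveq : L *ᵥ v = lam • v := by
      have h2 := hv.apply_eq_smul
      rw [show (Matrix.toLinAlgEquiv' L : (Z → ℝ) →ₗ[ℝ] (Z → ℝ)) v = L *ᵥ v from rfl] at h2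
      exact h2
    have hpoweq : ∀ n : ℕ, (L ^ n) *ᵥ v = (lam ^ n) • v := by
      intro n
      induction n with
      | zero => simp
      | succ n ih =>
        rw [pow_succ', ← Matrix.mulVec_mulVec, ih, Matrix.mulVec_smul, hveq,
          smul_smul, mul_comm (lam ^ n) lam, ← pow_succ']
    obtain ⟨z1, hz1⟩ : ∃ z1, v z1 ≠ 0 := Function.ne_iff.mp hvne
    obtain ⟨zV, -, hzV⟩ := Finset.exists_mem_eq_sup' (Finset.univ_nonempty (α := Z))
      (fun z => |v z|)
    set V : ℝ := Finset.univ.sup' Finset.univ_nonempty (fun z => |v z|) with hVdef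
    have hVle : ∀ z, |v z| ≤ V := fun z =>
      Finset.le_sup' (fun z => |v z|) (Finset.mem_univ z)
    have hVpos : 0 < V := lt_of_lt_of_le (abs_pos.mpr hz1) (hVle z1)
    have hbound : ∀ n : ℕ, |lam| ^ n * |v z1| ≤ V * (q n / pm) := by
      intro n
      have h1 : |lam ^ n * v z1| = |((L ^ n) *ᵥ v) z1| := by
        rw [hpoweq n]; simp [Pi.smul_apply, smul_eq_mul]
      have h2 : |((L ^ n) *ᵥ v) z1| ≤ ∑ z', (L ^ n) z1 z' * |v z'| := by
        refine le_trans (Finset.abs_sum_le_sum_abs _ _) ?_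
        refine Finset.sum_le_sum fun z' _ => ?_
        rw [abs_mul, abs_of_nonneg (hpnn n z1 z')]
      have h3 : ∑ z', (L ^ n) z1 z' * |v z'| ≤ V * ((L ^ n) *ᵥ (fun _ => 1)) z1 := by
        rw [Matrix.mulVec, dotProduct, Finset.mul_sum]
        refine Finset.sum_le_sum fun z' _ => ?_
        calc (L ^ n) z1 z' * |v z'| ≤ (L ^ n) z1 z' * V :=
              mul_le_mul_of_nonneg_left (hVle z') (hpnn n z1 z')
          _ = V * ((L ^ n) z1 z' * 1) := by ring
      have h4 : ((L ^ n) *ᵥ (fun _ => 1)) z1 ≤ q n / pm := by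
        rw [le_div_iff₀ hpm]
        linarith [hvle n z1]
      calc |lam| ^ n * |v z1| = |lam ^ n * v z1| := by rw [abs_mul, abs_pow]
        _ ≤ V * ((L ^ n) *ᵥ (fun _ => 1)) z1 := h1 ▸ le_trans h2 h3
        _ ≤ V * (q n / pm) := mul_le_mul_of_nonneg_left h4 hVpos.le
    -- take logs and limits
    have habs : 0 < |lam| := abs_pos.mpr hlam0
    have hA : 0 < V / (|v z1| * pm) := by positivity
    have hlog : ∀ n : ℕ, 1 ≤ n → Real.log |lam| ≤
        Real.log (V / (|v z1| * pm)) / n + Real.log (q n) / n := by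
      intro n hn
      have hn' : (0:ℝ) < n := by exact_mod_cast hn
      have h1 : |lam| ^ n ≤ (V / (|v z1| * pm)) * q n := by
        have hb := hbound n
        have h0 : 0 < |v z1| := abs_pos.mpr hz1
        rw [div_mul_eq_mul_div, le_div_iff₀ (by positivity : (0:ℝ) < |v z1| * pm)]
        calc |lam| ^ n * (|v z1| * pm) = (|lam| ^ n * |v z1|) * pm := by ring
          _ ≤ (V * (q n / pm)) * pm := mul_le_mul_of_nonneg_right hb hpm.le
          _ = V * q n := by field_simp
      have h2 := Real.log_le_log (pow_pos habs n) h1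
      rw [Real.log_pow, Real.log_mul hA.ne' (hqpos n).ne'] at h2
      rw [← add_div, le_div_iff₀ hn']
      calc Real.log |lam| * n = (n : ℝ) * Real.log |lam| := by ring
        _ ≤ Real.log (V / (|v z1| * pm)) + Real.log (q n) := h2
    have hrhs : Tendsto (fun n : ℕ => Real.log (V / (|v z1| * pm)) / n + Real.log (q n) / n)
        atTop (nhds (0 + l)) :=
      (tendsto_const_div_atTop_nhds_zero_nat _).add htends
    rw [zero_add] at hrhs
    have hfin : Real.log |lam| ≤ l :=
      ge_of_tendsto hrhs (eventually_atTop.mpr ⟨1, fun n hn => hlog n hn⟩)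
    calc |lam| = Real.exp (Real.log |lam|) := (Real.exp_log habs).symm
      _ ≤ Real.exp l := Real.exp_le_exp.mpr hfin
      _ = ρ := rfl
  -- Perron root: ρ is a real eigenvalue
  have hρspec : ρ ∈ spectrum ℝ L := by
    by_contra hns
    have hdetρ : (ρ • (1 : Matrix Z Z ℝ) - L).det ≠ 0 := by
      have hu : IsUnit (algebraMap ℝ (Matrix Z Z ℝ) ρ - L) := spectrum.notMem_iff.mp hns
      rw [Algebra.algebraMap_eq_smul_one, Matrix.isUnit_iff_isUnit_det] at hu
      exact hu.ne_zero
    have hdets : ∀ s : ℝ, ρ < s → (s • (1 : Matrix Z Z ℝ) - L).det ≠ 0 := by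
      intro s hs hd
      have hmem : s ∈ spectrum ℝ L := by
        rw [spectrum.mem_iff, Algebra.algebraMap_eq_smul_one, Matrix.isUnit_iff_isUnit_det, hd]
        intro h
        exact absurd (isUnit_zero_iff.mp h) (by norm_num)
      have := heig s hmem
      rw [abs_of_pos (lt_trans hρpos hs)] at this
      linarith
    set G : ℝ → ℝ :=
      fun s => π ⬝ᵥ ((s • (1 : Matrix Z Z ℝ) - L).adjugate *ᵥ (fun _ => 1)) with hGdef
    set p : ℝ → ℝ := fun s => (s • (1 : Matrix Z Z ℝ) - L).det with hpdef
    have hMc : Continuous fun s : ℝ => s • (1 : Matrix Z Z ℝ) - L :=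
      (continuous_id.smul continuous_const).sub continuous_const
    have hGc : Continuous G :=
      Continuous.dotProduct continuous_const
        ((hMc.matrix_adjugate).matrix_mulVec continuous_const)
    have hpc : Continuous p := hMc.matrix_det
    -- q N / s^N → 0 for s > ρ
    have hqso : ∀ s : ℝ, ρ < s → Tendsto (fun N : ℕ => q N / s ^ N) atTop (nhds 0) := by
      intro s hs
      have hspos : 0 < s := lt_trans hρpos hs
      set r : ℝ := Real.exp ((l + Real.log s) / 2) with hrdef
      have hls : l < Real.log s := by
        rw [← hlogρ]
        exact Real.log_lt_log hρpos hs
      have hrpos : 0 < r := Real.exp_pos _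
      have hrs : r < s := by
        have h0 : (l + Real.log s) / 2 < Real.log s := by linarith
        calc r = Real.exp ((l + Real.log s) / 2) := hrdef
          _ < Real.exp (Real.log s) := Real.exp_lt_exp.mpr h0
          _ = s := Real.exp_log hspos
      have hev : ∀ᶠ N : ℕ in atTop, q N / s ^ N ≤ (r / s) ^ N := by
        have h1 : ∀ᶠ N : ℕ in atTop, Real.log (q N) / N < (l + Real.log s) / 2 :=
          htends.eventually ((tendsto_id : Tendsto id (nhds l) (nhds l)).eventually_lt_const (by linarith))
        filter_upwards [h1, eventually_ge_atTop 1] with N hN hN1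
        have hN' : (0:ℝ) < N := by exact_mod_cast hN1
        have h2 : Real.log (q N) < N * ((l + Real.log s) / 2) := by
          rw [div_lt_iff₀ hN'] at hN
          linarith
        have h3 : q N ≤ r ^ N := by
          have := Real.exp_le_exp.mpr h2.le
          rw [Real.exp_log (hqpos N)] at this
          calc q N ≤ Real.exp ((N : ℝ) * ((l + Real.log s) / 2)) := this
            _ = r ^ N := by rw [hrdef, ← Real.exp_nat_mul]
        rw [div_pow, div_le_div_iff_of_pos_right (pow_pos hspos N)]
        exact h3
      refine squeeze_zero' ?_ hev ?_
      · filter_upwards with N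
        exact div_nonneg (hqpos N).le (by positivity)
      · exact tendsto_pow_atTop_nhds_zero_of_lt_one (by positivity)
          ((div_lt_one hspos).mpr hrs)
    -- lower bound on G s / p s for s > ρ
    have hFval : ∀ s : ℝ, ρ < s → pm / (s - ρ) ≤ G s / p s := by
      intro s hs
      have hspos : 0 < s := lt_trans hρpos hs
      set T : ℕ → ℝ := fun N => ∑ n ∈ Finset.range N, (s ^ (n+1))⁻¹ * q n with hTdef
      have hSid : ∀ N : ℕ,
          (s • (1 : Matrix Z Z ℝ) - L) * (∑ n ∈ Finset.range N, (s ^ (n+1))⁻¹ • L ^ n)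
            = 1 - (s ^ N)⁻¹ • L ^ N := by
        intro N
        induction N with
        | zero => simp
        | succ N ih =>
          rw [Finset.sum_range_succ, mul_add, ih]
          have hstep : (s • (1 : Matrix Z Z ℝ) - L) * ((s ^ (N+1))⁻¹ • L ^ N)
              = (s ^ N)⁻¹ • L ^ N - (s ^ (N+1))⁻¹ • L ^ (N+1) := by
            rw [sub_mul, Matrix.smul_mul, one_mul, smul_smul, mul_smul_comm, ← pow_succ']
            congr 2
            rw [pow_succ', mul_inv, ← mul_assoc, mul_inv_cancel₀ hspos.ne', one_mul]
          rw [hstep]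
          abel
      have hAid : ∀ N : ℕ,
          (p s) • (∑ n ∈ Finset.range N, (s ^ (n+1))⁻¹ • L ^ n)
            = (s • (1 : Matrix Z Z ℝ) - L).adjugate
              - (s ^ N)⁻¹ • ((s • (1 : Matrix Z Z ℝ) - L).adjugate * L ^ N) := by
        intro N
        have h1 := congrArg (fun M => (s • (1 : Matrix Z Z ℝ) - L).adjugate * M) (hSid N)
        rw [← mul_assoc, Matrix.adjugate_mul, Matrix.smul_mul, one_mul,
          mul_sub, mul_one, mul_smul_comm] at h1
        exact h1
      have hTrec : ∀ N : ℕ, T (N+1) = T N + (s ^ (N+1))⁻¹ * q N := fun N =>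
        Finset.sum_range_succ _ N
      have hTval : ∀ N : ℕ,
          π ⬝ᵥ ((∑ n ∈ Finset.range N, (s ^ (n+1))⁻¹ • L ^ n) *ᵥ (fun _ => 1)) = T N := by
        intro N
        induction N with
        | zero => simp [hTdef]
        | succ N ih =>
          rw [Finset.sum_range_succ, Matrix.add_mulVec, dotProduct_add, ih,
            Matrix.smul_mulVec, dotProduct_smul, smul_eq_mul, ← hq N, hTrec]
      -- the error term and its bound
      set E : ℕ → ℝ :=
        fun N => π ⬝ᵥ ((s • (1 : Matrix Z Z ℝ) - L).adjugate *ᵥ ((L ^ N) *ᵥ (fun _ => 1)))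
        with hEdef
      set CB : ℝ := ∑ z, π z * ∑ z', |(s • (1 : Matrix Z Z ℝ) - L).adjugate z z'| with hCBdef
      have hCBnn : 0 ≤ CB := Finset.sum_nonneg fun z _ => mul_nonneg (hπpos z).le
        (Finset.sum_nonneg fun z' _ => abs_nonneg _)
      have hEbound : ∀ N, |E N| ≤ CB * (q N / pm) := by
        intro N
        rw [hEdef]
        have h1 : ∀ z, |((s • (1 : Matrix Z Z ℝ) - L).adjugate *ᵥ ((L ^ N) *ᵥ (fun _ => 1))) z|
            ≤ (∑ z', |(s • (1 : Matrix Z Z ℝ) - L).adjugate z z'|) * (q N / pm) := by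
          intro z
          refine le_trans (Finset.abs_sum_le_sum_abs _ _) ?_
          rw [Finset.sum_mul]
          refine Finset.sum_le_sum fun z' _ => ?_
          rw [abs_mul]
          refine mul_le_mul (le_refl _) ?_ (abs_nonneg _) (abs_nonneg _)
          rw [abs_of_nonneg (hv1nn N z')]
          rw [le_div_iff₀ hpm]
          linarith [hvle N z']
        refine le_trans (Finset.abs_sum_le_sum_abs _ _) ?_
        rw [hCBdef, Finset.sum_mul]
        refine Finset.sum_le_sum fun z _ => ?_
        rw [abs_mul, abs_of_pos (hπpos z), mul_assoc]
        exact mul_le_mul_of_nonneg_left (h1 z) (hπpos z).le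
      have hps : p s ≠ 0 := hdets s hs
      -- p s * T N = G s - (s^N)⁻¹ * E N
      have hkey : ∀ N, p s * T N = G s - (s ^ N)⁻¹ * E N := by
        intro N
        have h1 := congrArg (fun M => π ⬝ᵥ (M *ᵥ (fun _ : Z => (1:ℝ)))) (hAid N)
        rw [Matrix.smul_mulVec, dotProduct_smul, smul_eq_mul, hTval N,
          Matrix.sub_mulVec, dotProduct_sub, Matrix.smul_mulVec,
          dotProduct_smul, smul_eq_mul, ← Matrix.mulVec_mulVec] at h1
        exact h1
      -- limit of T
      have herr : Tendsto (fun N : ℕ => (s ^ N)⁻¹ * E N) atTop (nhds 0) := by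
        refine squeeze_zero_norm (a := fun N => (CB / pm) * (q N / s ^ N)) (fun N => ?_) ?_
        · rw [Real.norm_eq_abs, abs_mul, abs_of_nonneg (by positivity : (0:ℝ) ≤ (s ^ N)⁻¹)]
          calc (s ^ N)⁻¹ * |E N| ≤ (s ^ N)⁻¹ * (CB * (q N / pm)) :=
                mul_le_mul_of_nonneg_left (hEbound N) (by positivity)
            _ = (CB / pm) * (q N / s ^ N) := by ring
        · have := (hqso s hs).const_mul (CB / pm)
          rwa [mul_zero] at this
      have hTlim : Tendsto T atTop (nhds (G s / p s)) := by
        have h1 : Tendsto (fun N => p s * T N) atTop (nhds (G s)) := by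
          have h2 : Tendsto (fun N : ℕ => G s - (s ^ N)⁻¹ * E N) atTop (nhds (G s - 0)) :=
            tendsto_const_nhds.sub herr
          rw [sub_zero] at h2
          exact h2.congr fun N => (hkey N).symm
        have h3 := h1.const_mul (p s)⁻¹
        rw [div_eq_inv_mul]
        refine h3.congr fun N => ?_
        field_simp
      -- geometric lower bound
      have hgeo : Tendsto (fun N : ℕ => ∑ n ∈ Finset.range N, (pm / s) * (ρ / s) ^ n)
          atTop (nhds (pm / (s - ρ))) := by
        have h1 : (0:ℝ) ≤ ρ / s := by positivity
        have h2 : ρ / s < 1 := (div_lt_one hspos).mpr hs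
        have h3 := ((hasSum_geometric_of_lt_one h1 h2).tendsto_sum_nat).const_mul (pm / s)
        have h4 : pm / s * (1 - ρ / s)⁻¹ = pm / (s - ρ) := by
          have hsne : s ≠ 0 := hspos.ne'
          have hsρ : s - ρ ≠ 0 := sub_ne_zero.mpr (ne_of_gt hs)
          field_simp
        rw [h4] at h3
        refine h3.congr fun N => ?_
        rw [Finset.mul_sum]
      refine le_of_tendsto_of_tendsto' hgeo hTlim fun N => ?_
      refine Finset.sum_le_sum fun n _ => ?_
      have h5 : pm / s * (ρ / s) ^ n = (s ^ (n+1))⁻¹ * (pm * ρ ^ n) := by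
        rw [div_pow, pow_succ']
        field_simp
      rw [h5]
      exact mul_le_mul_of_nonneg_left (hql n) (by positivity)
    -- blow-up contradiction
    set sk : ℕ → ℝ := fun k => ρ + ((k:ℝ)+1)⁻¹ with hskdef
    have hsk : Tendsto sk atTop (nhds ρ) := by
      have h1 : Tendsto (fun k : ℕ => ((k:ℝ)+1)⁻¹) atTop (nhds 0) := by
        have := tendsto_one_div_add_atTop_nhds_zero_nat (𝕜 := ℝ)
        simpa [one_div] using this
      have h2 := h1.const_add ρ
      rwa [add_zero] at h2
    have hFlim : Tendsto (fun k => G (sk k) / p (sk k)) atTop (nhds (G ρ / p ρ)) :=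
      Tendsto.div ((hGc.tendsto ρ).comp hsk) ((hpc.tendsto ρ).comp hsk) hdetρ
    have hFbig : ∀ k : ℕ, pm * ((k:ℝ)+1) ≤ G (sk k) / p (sk k) := by
      intro k
      have hkpos : (0:ℝ) < (k:ℝ)+1 := by positivity
      have h1 : ρ < sk k := lt_add_of_pos_right ρ (by positivity)
      have h2 := hFval (sk k) h1
      rw [hskdef] at h2
      simp only [add_sub_cancel_left] at h2
      rwa [div_eq_mul_inv, inv_inv] at h2
    have hFtop : Tendsto (fun k => G (sk k) / p (sk k)) atTop atTop := by
      refine tendsto_atTop_mono hFbig ?_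
      have h1 : Tendsto (fun k : ℕ => (k:ℝ)+1) atTop atTop :=
        tendsto_atTop_add_const_right _ 1 tendsto_natCast_atTop_atTop
      exact h1.const_mul_atTop hpm
    exact not_tendsto_atTop_of_tendsto_nhds hFlim hFtop
  -- identify the spectral radius
  have hspecRad : specRad L = ρ := by
    have hCLM : LinearMap.toContinuousLinearMap (Matrix.toEuclideanLin L)
        = Matrix.toEuclideanCLM (𝕜 := ℝ) L := by
      apply ContinuousLinearMap.coe_injective
      rw [Matrix.coe_toEuclideanCLM_eq_toEuclideanLin, LinearMap.coe_toContinuousLinearMap]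
    have hsp : spectrum ℝ (Matrix.toEuclideanCLM (𝕜 := ℝ) L) = spectrum ℝ L :=
      AlgEquiv.spectrum_eq _ _
    rw [specRad, hCLM, spectralRadius, hsp]
    have hsup : (⨆ k ∈ spectrum ℝ L, (‖k‖₊ : ℝ≥0∞)) = ((Real.toNNReal ρ : ℝ≥0) : ℝ≥0∞) := by
      apply le_antisymm
      · refine iSup₂_le fun k hk => ?_
        rw [ENNReal.coe_le_coe, ← NNReal.coe_le_coe, coe_nnnorm, Real.norm_eq_abs,
          Real.coe_toNNReal _ hρpos.le]
        exact heig k hk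
      · have he : ((Real.toNNReal ρ : ℝ≥0) : ℝ≥0∞) = ((‖ρ‖₊ : ℝ≥0) : ℝ≥0∞) := by
          rw [Real.toNNReal_of_nonneg hρpos.le, Real.nnnorm_of_nonneg hρpos.le]
        rw [he]
        exact le_iSup₂ (f := fun (k : ℝ) (_ : k ∈ spectrum ℝ L) => ((‖k‖₊ : ℝ≥0) : ℝ≥0∞)) ρ hρspec
    rw [hsup, ENNReal.coe_toReal, Real.coe_toNNReal _ hρpos.le]
  rw [hspecRad, hlogρ]
  exact htends.neg.congr fun n => (neg_div _ _).symm

/-- with `L(z,z') = Φ(z,z')·E[m(z',ε)]` and `q_n = E[∏_{t=1}^n M_t]` under the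
stationary initial distribution `π`, the asymptotic yield `κ(M) = lim (−ln q_n)/n` exists and
equals `−ln s(L)`. -/
theorem stmt1 {Z : Type*} [Fintype Z] [DecidableEq Z] [Nonempty Z]
    {Ωe : Type*} [MeasurableSpace Ωe] (με : Measure Ωe) [IsProbabilityMeasure με]
    (Φ : Z → Z → ℝ) (m : Z → Ωe → ℝ)
    (hΦnn : ∀ z z', 0 ≤ Φ z z') (hΦrow : ∀ z, ∑ z', Φ z z' = 1)
    (hirr : ∀ z z', ∃ n : ℕ, 0 < ((Matrix.of Φ) ^ n) z z')
    (hm : ∀ z ε, 0 ≤ m z ε) (hmpos : ∀ z, 0 < ∫ ε, m z ε ∂με)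
    (hmint : ∀ z, Integrable (m z) με)
    (π : Z → ℝ) (hπnn : ∀ z, 0 ≤ π z) (hπsum : ∑ z, π z = 1)
    (hπstat : ∀ z', ∑ z, π z * Φ z z' = π z')
    (L : Matrix Z Z ℝ)
    (hL : ∀ z z', L z z' = Φ z z' * ∫ ε, m z' ε ∂με)
    (q : ℕ → ℝ)
    (hq : ∀ n, q n = ∑ z, π z * pathExp Φ (fun z' => ∫ ε, m z' ε ∂με) n (fun _ => 1) z) :
    Tendsto (fun n : ℕ => - Real.log (q n) / n) atTop (nhds (- Real.log (specRad L))) := by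
  classical
  set mbar : Z → ℝ := fun z' => ∫ ε, m z' ε ∂με with hmbar
  have hLeq : L = Matrix.of (fun a b => Φ a b * mbar b) := by
    ext a b
    exact hL a b
  have hπpos : ∀ z, 0 < π z := stationary_pos Φ hΦnn hirr π hπnn hπsum hπstat
  have hq' : ∀ n, q n = π ⬝ᵥ ((L ^ n) *ᵥ (fun _ => 1)) := by
    intro n
    rw [hq n, dotProduct]
    refine Finset.sum_congr rfl fun z _ => ?_
    rw [pathExp_eq, hLeq]
  have hLnn : ∀ i j, 0 ≤ L i j := by
    intro i j
    rw [hL i j]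
    exact mul_nonneg (hΦnn i j) (integral_nonneg (hm j))
  obtain ⟨zc, -, hzc⟩ := Finset.exists_mem_eq_inf' (Finset.univ_nonempty (α := Z)) mbar
  set cL : ℝ := Finset.univ.inf' Finset.univ_nonempty mbar with hcLdef
  have hcLpos : 0 < cL := hzc ▸ hmpos zc
  have hcLle : ∀ z, cL ≤ mbar z := fun z => Finset.inf'_le mbar (Finset.mem_univ z)
  have hvlow : ∀ (n : ℕ) (z : Z), cL ^ n ≤ ((L ^ n) *ᵥ (fun _ => 1)) z := by
    intro n
    induction n with
    | zero =>
      intro z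
      simp [Matrix.mulVec, dotProduct, Matrix.one_apply]
    | succ n ih =>
      intro z
      rw [show L ^ (n+1) = L * L ^ n from pow_succ' L n, ← Matrix.mulVec_mulVec]
      have h1 : ∀ z', Φ z z' * cL ^ (n+1) ≤ L z z' * ((L ^ n) *ᵥ (fun _ => 1)) z' := by
        intro z'
        rw [hL z z', mul_assoc]
        refine mul_le_mul_of_nonneg_left ?_ (hΦnn z z')
        rw [pow_succ']
        exact mul_le_mul (hcLle z') (ih z') (pow_nonneg hcLpos.le n)
          (le_trans hcLpos.le (hcLle z'))
      calc cL ^ (n+1) = ∑ z', Φ z z' * cL ^ (n+1) := by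
            rw [← Finset.sum_mul, hΦrow z, one_mul]
        _ ≤ ∑ z', L z z' * ((L ^ n) *ᵥ (fun _ => 1)) z' := Finset.sum_le_sum fun z' _ => h1 z'
        _ = (L *ᵥ ((L ^ n) *ᵥ (fun _ => 1))) z := rfl
  have hlow : ∀ n, cL ^ n ≤ q n := by
    intro n
    rw [hq' n]
    calc cL ^ n = ∑ z, π z * cL ^ n := by rw [← Finset.sum_mul, hπsum, one_mul]
      _ ≤ ∑ z, π z * ((L ^ n) *ᵥ (fun _ => 1)) z :=
          Finset.sum_le_sum fun z _ => mul_le_mul_of_nonneg_left (hvlow n z) (hπnn z)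
      _ = π ⬝ᵥ ((L ^ n) *ᵥ (fun _ => 1)) := rfl
  exact auxKey L hLnn π hπpos q hq' cL hcLpos hlow
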